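/- Let W_σ ~ N(0, 2σ²) and define E(σ) = E[sigmoid(|W_σ|)]. Then for any σ_2 > σ_1 > 0 and any common mean μ (which does not affect the value), E(σ_2) > E(σ_1). That is, the expected maximum binary softmax probability of logits (z_1, z_2) with z_1, z_2 i.i.d. N(μ, σ²) is strictly increasing in σ. -/
import Mathlib

open MeasureTheory ProbabilityTheory Real
open scoped ENNReal NNReal

lemma gauss_scale (σ : NNReal) :
    gaussianReal 0 (2 * σ ^ 2)
      = (gaussianReal 0 1).map ((Real.sqrt 2 * σ) * ·) := by
  rw [gaussianReal_map_const_mul]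
  congr 1
  · simp
  · ext
    push_cast
    rw [mul_pow, sq_sqrt two_pos.le]
    ring

lemma sig_lt {a b : ℝ} (h : a < b) :
    1 / (1 + Real.exp (-a)) < 1 / (1 + Real.exp (-b)) := by
  have hb : (0:ℝ) < 1 + Real.exp (-b) := by positivity
  apply one_div_lt_one_div_of_lt hb
  have := Real.exp_lt_exp.2 (neg_lt_neg h)
  linarith

lemma sig_le {a b : ℝ} (h : a ≤ b) :
    1 / (1 + Real.exp (-a)) ≤ 1 / (1 + Real.exp (-b)) := by
  rcases eq_or_lt_of_le h with rfl | h
  · exact le_rfl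
  · exact (sig_lt h).le

lemma sig_cont : Continuous fun x : ℝ => 1 / (1 + Real.exp (-|x|)) := by
  apply Continuous.div continuous_const
  · continuity
  · intro x; positivity

lemma sig_bound (x : ℝ) : ‖1 / (1 + Real.exp (-|x|))‖ ≤ 1 := by
  rw [Real.norm_eq_abs, abs_of_nonneg (by positivity)]
  rw [div_le_one (by positivity)]
  have := Real.exp_pos (-|x|)
  linarith

/-- Proposition 1: the expected maximum binary softmax probability,
`E(σ) = E[sigmoid(|W_σ|)]` with `W_σ ~ N(0, 2σ²)`, is strictly increasing in `σ`. -/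
theorem expected_confidence_strictMono (σ₁ σ₂ : NNReal) (h₁ : 0 < σ₁) (h₁₂ : σ₁ < σ₂) :
    (∫ x, 1 / (1 + Real.exp (-|x|)) ∂(gaussianReal 0 (2 * σ₁ ^ 2)))
      < ∫ x, 1 / (1 + Real.exp (-|x|)) ∂(gaussianReal 0 (2 * σ₂ ^ 2)) := by
  set f : ℝ → ℝ := fun x => 1 / (1 + Real.exp (-|x|)) with hf
  set c₁ : ℝ := Real.sqrt 2 * σ₁ with hc1
  set c₂ : ℝ := Real.sqrt 2 * σ₂ with hc2
  have hc1pos : 0 < c₁ := by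
    apply mul_pos (Real.sqrt_pos.2 two_pos)
    exact_mod_cast h₁
  have hc12 : c₁ < c₂ := by
    apply mul_lt_mul_of_pos_left _ (Real.sqrt_pos.2 two_pos)
    exact_mod_cast h₁₂
  rw [gauss_scale σ₁, gauss_scale σ₂,
    integral_map (by fun_prop) sig_cont.aestronglyMeasurable,
    integral_map (by fun_prop) sig_cont.aestronglyMeasurable]
  set γ := gaussianReal 0 1 with hγ
  have hint : ∀ c : ℝ, Integrable (fun x => f (c * x)) γ := by
    intro c
    refine (integrable_const 1).mono' ?_ (Filter.Eventually.of_forall fun x => sig_bound _)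
    exact (sig_cont.comp (continuous_const.mul continuous_id)).aestronglyMeasurable
  have key : 0 < ∫ x, (f (c₂ * x) - f (c₁ * x)) ∂γ := by
    rw [integral_pos_iff_support_of_nonneg_ae]
    · have hsub : {x : ℝ | x ≠ 0} ⊆ Function.support fun x => f (c₂ * x) - f (c₁ * x) := by
        intro x hx
        have hxx : 0 < |x| := abs_pos.2 hx
        have : c₁ * |x| < c₂ * |x| := by nlinarith
        have hlt : f (c₁ * x) < f (c₂ * x) := by
          simp only [hf, abs_mul, abs_of_pos hc1pos, abs_of_pos (hc1pos.trans hc12)]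
          exact sig_lt this
        simp [Function.mem_support, sub_ne_zero]
        exact (ne_of_lt hlt).symm
      have h0 : γ {(0:ℝ)} = 0 := by
        refine gaussianReal_absolutelyContinuous 0 one_ne_zero ?_
        simp
      calc (0:ℝ≥0∞) < 1 := zero_lt_one
        _ = γ {x : ℝ | x ≠ 0} := by
            have hcompl : {x : ℝ | x ≠ 0} = ({0} : Set ℝ)ᶜ := rfl
            rw [hcompl, measure_compl (by measurability) (by simp), h0]
            simp
        _ ≤ _ := measure_mono hsub
    · filter_upwards with x
      have : c₁ * |x| ≤ c₂ * |x| := by nlinarith [abs_nonneg x]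
      simp only [hf, abs_mul, abs_of_pos hc1pos, abs_of_pos (hc1pos.trans hc12), Pi.zero_apply, sub_nonneg]
      exact sig_le this
    · exact (hint c₂).sub (hint c₁)
  rw [integral_sub (hint c₂) (hint c₁)] at key
  show (∫ x, f (c₁ * x) ∂γ) < ∫ x, f (c₂ * x) ∂γ
  linarith
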